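/- Let L be an integral ℓ-monoid, X a finite alphabet, and φ : X* → (L, ⊗, 1) a monoid homomorphism. Then for every subset U ⊆ X* and every map γ : X* → {0,1} ⊆ L, the set {φ(u)⊗γ(u) : u ∈ U} has a least upper bound in L, and ⋁_{u∈U} φ(u)⊗γ(u) = ⋁_{u∈M(U′)} φ(u)⊗γ(u), where U′ = {u ∈ U : γ(u) = 1} and M(U′) denotes the (finite) set of minimal elements of U′ with respect to the embedding order ≤_em. -/

import Mathlib

/-- A lattice-ordered monoid (ℓ-monoid). -/
class LMonoid (L : Type*) extends Lattice L, BoundedOrder L, Monoid L where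
  mul_bot : ∀ x : L, x * ⊥ = ⊥
  bot_mul : ∀ x : L, ⊥ * x = ⊥
  mul_sup : ∀ x y z : L, x * (y ⊔ z) = x * y ⊔ x * z
  sup_mul : ∀ x y z : L, (x ⊔ y) * z = x * z ⊔ y * z

/-- An integral ℓ-monoid: the unit of the multiplication is the top element of the lattice. -/
class IntegralLMonoid (L : Type*) extends LMonoid L where
  one_eq_top : (1 : L) = ⊤

/-- The set `M(U)` of minimal words of `U ⊆ X*` with respect to the embedding
(sublist) order. -/
def minimalWords {X : Type*} (U : Set (List X)) : Set (List X) :=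
  {u ∈ U | ∀ v ∈ U, List.Sublist v u → v = u}

section Aux

variable {L : Type*} [IntegralLMonoid L]

lemma aux_mul_le_mul_left {a b : L} (c : L) (h : a ≤ b) : c * a ≤ c * b := by
  have := LMonoid.mul_sup c a b
  rw [sup_eq_right.2 h] at this
  rw [this]; exact le_sup_left

lemma aux_mul_le_mul_right {a b : L} (c : L) (h : a ≤ b) : a * c ≤ b * c := by
  have := LMonoid.sup_mul a b c
  rw [sup_eq_right.2 h] at this
  rw [this]; exact le_sup_left

lemma aux_mul_le_left (x y : L) : x * y ≤ x := by
  calc x * y ≤ x * ⊤ := aux_mul_le_mul_left x le_top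
  _ = x * 1 := by rw [IntegralLMonoid.one_eq_top]
  _ = x := mul_one x

lemma aux_mul_le_right (x y : L) : x * y ≤ y := by
  calc x * y ≤ ⊤ * y := aux_mul_le_mul_right y le_top
  _ = 1 * y := by rw [IntegralLMonoid.one_eq_top]
  _ = y := one_mul y

lemma aux_phi_antitone {X : Type*} (φ : FreeMonoid X →* L) {u v : List X}
    (h : List.Sublist v u) : φ (FreeMonoid.ofList u) ≤ φ (FreeMonoid.ofList v) := by
  induction h with
  | slnil => exact le_refl _
  | cons a h ih =>
    rw [FreeMonoid.ofList_cons, map_mul]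
    exact le_trans (aux_mul_le_right _ _) ih
  | cons_cons a h ih =>
    rw [FreeMonoid.ofList_cons, FreeMonoid.ofList_cons, map_mul, map_mul]
    exact aux_mul_le_mul_left _ ih

end Aux

lemma aux_exists_minimal {X : Type*} (U' : Set (List X)) :
    ∀ u ∈ U', ∃ v ∈ minimalWords U', List.Sublist v u := by
  have H : ∀ n : ℕ, ∀ u : List X, u.length ≤ n → u ∈ U' →
      ∃ v ∈ minimalWords U', List.Sublist v u := by
    intro n
    induction n with
    | zero =>
      intro u h hu
      have : u = [] := List.eq_nil_of_length_eq_zero (Nat.le_zero.1 h)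
      subst this
      exact ⟨[], ⟨hu, fun v _ hv => List.sublist_nil.1 hv⟩, List.Sublist.refl _⟩
    | succ n ih =>
      intro u h hu
      by_cases hmin : ∀ v ∈ U', List.Sublist v u → v = u
      · exact ⟨u, ⟨hu, hmin⟩, List.Sublist.refl _⟩
      · push_neg at hmin
        obtain ⟨v, hv, hvu, hne⟩ := hmin
        have hlt : v.length < u.length :=
          lt_of_le_of_ne hvu.length_le fun he => hne (hvu.eq_of_length he)
        obtain ⟨w, hw, hwv⟩ := ih v (by omega) hv
        exact ⟨w, hw, hwv.trans hvu⟩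
  exact fun u hu => H u.length u le_rfl hu

lemma aux_minimal_finite {X : Type*} [Finite X] (U' : Set (List X)) :
    (minimalWords U').Finite := by
  have hpwo : (Set.univ : Set (List X)).PartiallyWellOrderedOn
      (List.SublistForall₂ (· = · : X → X → Prop)) := by
    have h := (Set.finite_univ (α := X)).partiallyWellOrderedOn
      (r := (· = · : X → X → Prop))
    have := h.partiallyWellOrderedOn_sublistForall₂
    convert this using 1
    ext l; simp
  have hpwo' : (minimalWords U').PartiallyWellOrderedOn (fun a b => List.Sublist a b) := by
    intro f
    obtain ⟨m, n, hmn, h⟩ := hpwo (fun n => ⟨(f n).1, Set.mem_univ _⟩)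
    change List.SublistForall₂ _ (f m).1 (f n).1 at h
    refine ⟨m, n, hmn, ?_⟩
    rw [List.sublistForall₂_iff] at h
    obtain ⟨l, hl, hsub⟩ := h
    have heq : (f m).1 = l := List.forall₂_eq_eq_eq ▸ hl
    rw [← heq] at hsub; exact hsub
  have hanti : IsAntichain (fun a b => List.Sublist a b) (minimalWords U') := by
    intro a ha b hb hne hab
    exact hne (hb.2 a ha.1 hab)
  exact hanti.finite_of_partiallyWellOrderedOn hpwo'

/-- Let `L` be an integral ℓ-monoid, `X` a finite alphabet and
`φ : X* → (L, ⊗, 1)` a monoid homomorphism.  For every `U ⊆ X*` and every map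
`γ : X* → {0, 1} ⊆ L`, the set `{φ(u) ⊗ γ(u) : u ∈ U}` has a least upper bound in `L`
and `⋁_{u ∈ U} φ(u) ⊗ γ(u) = ⋁_{u ∈ M(U')} φ(u) ⊗ γ(u)`, where
`U' = {u ∈ U : γ(u) = 1}` and `M(U')` is the set of `≤_em`-minimal elements of `U'`. -/
theorem stmt2 {L X : Type*} [IntegralLMonoid L] [Finite X] (φ : FreeMonoid X →* L)
    (U : Set (List X)) (γ : List X → L) (hγ : ∀ u, γ u = 1 ∨ γ u = ⊥) :
    ∃ s : L,
      IsLUB {l | ∃ u ∈ U, l = φ (FreeMonoid.ofList u) * γ u} s ∧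
      IsLUB {l | ∃ u ∈ minimalWords {u ∈ U | γ u = 1},
        l = φ (FreeMonoid.ofList u) * γ u} s := by
  classical
  set U' : Set (List X) := {u ∈ U | γ u = 1} with hU'
  set f : List X → L := fun u => φ (FreeMonoid.ofList u) * γ u with hf
  set S₂ : Set L := {l | ∃ u ∈ minimalWords U', l = f u} with hS₂
  have hfin : S₂.Finite := by
    have : S₂ = f '' minimalWords U' := by
      ext l; simp [hS₂, Set.mem_image, eq_comm]
    rw [this]
    exact (aux_minimal_finite U').image f
  set s : L := hfin.toFinset.sup id with hs
  have hub₂ : ∀ l ∈ S₂, l ≤ s := fun l hl =>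
    Finset.le_sup (f := id) (hfin.mem_toFinset.2 hl)
  have hlub₂ : IsLUB S₂ s := by
    constructor
    · exact fun l hl => hub₂ l hl
    · intro b hb
      refine Finset.sup_le fun x hx => hb (hfin.mem_toFinset.1 hx)
  refine ⟨s, ?_, hlub₂⟩
  constructor
  · rintro l ⟨u, hu, rfl⟩
    rcases hγ u with h1 | hbot
    · have huU' : u ∈ U' := ⟨hu, h1⟩
      obtain ⟨v, hv, hvu⟩ := aux_exists_minimal U' u huU'
      have hγv : γ v = 1 := hv.1.2
      have : f u ≤ f v := by
        rw [hf]; dsimp only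
        rw [h1, hγv, mul_one, mul_one]
        exact aux_phi_antitone φ hvu
      exact le_trans this (hub₂ (f v) ⟨v, hv, rfl⟩)
    · show f u ≤ s
      rw [hf]; dsimp only
      rw [hbot, LMonoid.mul_bot]
      exact bot_le
  · intro b hb
    refine hlub₂.2 fun l hl => ?_
    obtain ⟨u, hu, rfl⟩ := hl
    exact hb ⟨u, hu.1.1, rfl⟩
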